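/- Let S₁,…,S_r be random subsets of a finite metric space (V,d) with parameters R_i = 2^{i-2}, such that for all u,v with d(u,v) > R_i we have P(cut_{u,v}(S_i)) ≥ 1/2. Let ρ be the characteristic embedding. Then for every u ≠ v with 1 ≤ d(u,v) ≤ 2^{r-2}, E[max_i |ρ(u)_i − ρ(v)_i|] ≥ d(u,v)/4. -/

import Mathlib

open MeasureTheory
open scoped Classical

/-- Lower bound for the characteristic embedding: if each cut `S_i` (scale
`R_i = 2^(i-2)`, `i = 1, …, r`) separates every pair at distance `> R_i` with
probability at least 1/2, then for every pair `u ≠ v` of points (all pairwise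
distances lying in `[1, 2^(r-2)]`), the expected ℓ∞ distance of the embedded
points is at least `d(u,v)/4`. -/
theorem embedding_lower_bound
    (V : Type*) [MetricSpace V] [Fintype V] (r : ℕ) (hr : 1 ≤ r)
    (Ω : Type*) [MeasurableSpace Ω] (μ : Measure Ω) [IsProbabilityMeasure μ]
    (S : ℕ → Ω → Set V)
    (hmeas : ∀ i (v : V), MeasurableSet {ω | v ∈ S i ω})
    (hlow : ∀ u v : V, u ≠ v → 1 ≤ dist u v)
    (hhigh : ∀ u v : V, dist u v ≤ (2 : ℝ) ^ ((r : ℤ) - 2))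
    (hcut : ∀ i ∈ Finset.Icc 1 r, ∀ u v : V, dist u v > (2 : ℝ) ^ ((i : ℤ) - 2) →
      μ {ω | ¬ (u ∈ S i ω ↔ v ∈ S i ω)} ≥ 1/2)
    (u v : V) (huv : u ≠ v) :
    dist u v / 4 ≤
      ∫ ω, (Finset.Icc 1 r).sup' (Finset.nonempty_Icc.mpr hr)
        (fun i => |(if u ∈ S i ω then (2 : ℝ) ^ ((i : ℤ) - 2) else 0)
                 - (if v ∈ S i ω then (2 : ℝ) ^ ((i : ℤ) - 2) else 0)|) ∂μ := by
  classical
  have hd1 : (1:ℝ) ≤ dist u v := hlow u v huv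
  -- choose the scale i with 2^(i-2) < d ≤ 2^(i-1)
  have hex : ∃ i : ℕ, 1 ≤ i ∧ dist u v ≤ (2:ℝ) ^ ((i:ℤ) - 1) := by
    refine ⟨r, hr, le_trans (hhigh u v) ?_⟩
    apply zpow_le_zpow_right₀ (by norm_num)
    omega
  set i := Nat.find hex with hi_def
  obtain ⟨hi1, hile⟩ := Nat.find_spec hex
  have hir : i ≤ r := Nat.find_min' hex ⟨hr, le_trans (hhigh u v) (by
    apply zpow_le_zpow_right₀ (by norm_num); omega)⟩
  have himem : i ∈ Finset.Icc 1 r := Finset.mem_Icc.mpr ⟨hi1, hir⟩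
  have hlt : (2:ℝ) ^ ((i:ℤ) - 2) < dist u v := by
    rcases eq_or_lt_of_le hi1 with h1 | h2
    · have : ((i:ℤ) - 2) = (-1 : ℤ) := by omega
      rw [this]
      calc (2:ℝ) ^ (-1 : ℤ) = 1/2 := by norm_num
        _ < 1 := by norm_num
        _ ≤ dist u v := hd1
    · by_contra hcon
      push_neg at hcon
      have := Nat.find_min hex (show i - 1 < i by omega)
      apply this
      refine ⟨by omega, ?_⟩
      have : (((i - 1 : ℕ) : ℤ) - 1) = (i:ℤ) - 2 := by omega
      rw [this]; exact hcon
  set c : ℝ := (2:ℝ) ^ ((i:ℤ) - 2) with hc_def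
  have hcpos : 0 < c := by positivity
  set E : Set Ω := {ω | ¬ (u ∈ S i ω ↔ v ∈ S i ω)} with hE_def
  have hEmeas : MeasurableSet E := by
    have : E = ({ω | u ∈ S i ω} ∩ {ω | v ∈ S i ω}ᶜ) ∪
        ({ω | u ∈ S i ω}ᶜ ∩ {ω | v ∈ S i ω}) := by
      ext ω; simp only [hE_def, Set.mem_setOf_eq, Set.mem_union, Set.mem_inter_iff,
        Set.mem_compl_iff]; tauto
    rw [this]
    exact ((hmeas i u).inter (hmeas i v).compl).union ((hmeas i u).compl.inter (hmeas i v))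
  have hEcut : μ E ≥ 1/2 := hcut i himem u v hlt
  set f : Ω → ℝ := fun ω => (Finset.Icc 1 r).sup' (Finset.nonempty_Icc.mpr hr)
        (fun j => |(if u ∈ S j ω then (2 : ℝ) ^ ((j : ℤ) - 2) else 0)
                 - (if v ∈ S j ω then (2 : ℝ) ^ ((j : ℤ) - 2) else 0)|) with hf_def
  have hfmeas : Measurable f := by
    rw [hf_def]
    have heq : (fun ω => (Finset.Icc 1 r).sup' (Finset.nonempty_Icc.mpr hr)
        (fun j => |(if u ∈ S j ω then (2 : ℝ) ^ ((j : ℤ) - 2) else 0)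
                 - (if v ∈ S j ω then (2 : ℝ) ^ ((j : ℤ) - 2) else 0)|))
        = (Finset.Icc 1 r).sup' (Finset.nonempty_Icc.mpr hr)
        (fun j ω => |(if u ∈ S j ω then (2 : ℝ) ^ ((j : ℤ) - 2) else 0)
                 - (if v ∈ S j ω then (2 : ℝ) ^ ((j : ℤ) - 2) else 0)|) := by
      ext ω
      rw [Finset.sup'_apply]
    rw [heq]
    apply Finset.measurable_sup' (Finset.nonempty_Icc.mpr hr)
    intro j _
    apply Measurable.abs
    apply Measurable.sub <;>
    · apply Measurable.ite _ measurable_const measurable_const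
      exact hmeas j _
  have hfbound : ∀ ω, |f ω| ≤ (2:ℝ) ^ ((r:ℤ) - 2) := by
    intro ω
    simp only [hf_def]
    rw [abs_of_nonneg (le_trans (abs_nonneg _) (Finset.le_sup' (fun j => |(if u ∈ S j ω then (2 : ℝ) ^ ((j : ℤ) - 2) else 0) - (if v ∈ S j ω then (2 : ℝ) ^ ((j : ℤ) - 2) else 0)|) himem))]
    apply Finset.sup'_le
    intro j hj
    have hjr : j ≤ r := (Finset.mem_Icc.mp hj).2
    have hb : (2:ℝ) ^ ((j:ℤ) - 2) ≤ (2:ℝ) ^ ((r:ℤ) - 2) := by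
      apply zpow_le_zpow_right₀ (by norm_num); omega
    have h2 : (0:ℝ) ≤ (2:ℝ) ^ ((j:ℤ) - 2) := by positivity
    rcases Classical.em (u ∈ S j ω) with h | h <;>
      rcases Classical.em (v ∈ S j ω) with h' | h' <;>
      simp [h, h', abs_of_nonneg, abs_of_nonpos, h2] <;> linarith
  have hfint : Integrable f μ := by
    refine Integrable.mono' (integrable_const ((2:ℝ) ^ ((r:ℤ) - 2)))
      hfmeas.aestronglyMeasurable ?_
    filter_upwards with ω
    simpa using hfbound ω
  have hind : ∀ ω, E.indicator (fun _ => c) ω ≤ f ω := by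
    intro ω
    simp only [hf_def]
    by_cases hω : ω ∈ E
    · rw [Set.indicator_of_mem hω]
      refine le_trans ?_ (Finset.le_sup' (fun j => |(if u ∈ S j ω then (2 : ℝ) ^ ((j : ℤ) - 2) else 0) - (if v ∈ S j ω then (2 : ℝ) ^ ((j : ℤ) - 2) else 0)|) himem)
      have hne : ¬ (u ∈ S i ω ↔ v ∈ S i ω) := hω
      rcases Classical.em (u ∈ S i ω) with h | h <;>
        rcases Classical.em (v ∈ S i ω) with h' | h' <;>
        simp [h, h', hc_def, abs_of_nonneg, abs_of_nonpos, le_of_lt hcpos] <;> tauto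
    · rw [Set.indicator_of_notMem hω]
      exact le_trans (abs_nonneg _) (Finset.le_sup' (fun j => |(if u ∈ S j ω then (2 : ℝ) ^ ((j : ℤ) - 2) else 0) - (if v ∈ S j ω then (2 : ℝ) ^ ((j : ℤ) - 2) else 0)|) himem)
  have hint_le : ∫ ω, E.indicator (fun _ => c) ω ∂μ ≤ ∫ ω, f ω ∂μ := by
    apply integral_mono_of_nonneg
    · filter_upwards with ω
      exact Set.indicator_nonneg (fun _ _ => le_of_lt hcpos) ω
    · exact hfint
    · filter_upwards with ω; exact hind ω
  have hind_val : ∫ ω, E.indicator (fun _ => c) ω ∂μ = (μ E).toReal * c := by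
    rw [integral_indicator_const _ hEmeas]; simp [smul_eq_mul, Measure.real]
  have hμE : (1/2 : ℝ) ≤ (μ E).toReal := by
    have h1 : ((1/2 : ENNReal)).toReal ≤ (μ E).toReal :=
      ENNReal.toReal_mono (measure_ne_top μ E) hEcut
    simpa using h1
  have hc_half : dist u v / 4 ≤ (1/2) * c := by
    have : dist u v ≤ 2 * c := by
      have : (2:ℝ) ^ ((i:ℤ) - 1) = 2 * c := by
        rw [hc_def, ← zpow_one_add₀ (by norm_num : (2:ℝ) ≠ 0)]
        ring_nf
      linarith [hile, this.symm.le]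
    linarith
  calc dist u v / 4 ≤ (1/2) * c := hc_half
    _ ≤ (μ E).toReal * c := by
        apply mul_le_mul_of_nonneg_right hμE (le_of_lt hcpos)
    _ = ∫ ω, E.indicator (fun _ => c) ω ∂μ := hind_val.symm
    _ ≤ ∫ ω, f ω ∂μ := hint_le
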